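/- Let q_1 be the unique root of x^6 - x^4 - x^3 - 2x^2 - x - 1 in (1,2) and q_4 the unique root of x^7 - x^5 - x^4 - 2x^3 - 2x^2 - x - 1 in (1,2). The function q ↦ ln((q^2+1)/(-q^4+q^3+q^2+1)) / ln q is strictly increasing on [q_1, q_4], takes value 3 at q_1 and value 4 at q_4. -/

import Mathlib

open Real Set

private lemma aux_Dpos {x : ℝ} (h1 : 1.64 ≤ x) (h2 : x ≤ 1.7) :
    0 < -x^4 + x^3 + x^2 + 1 := by
  nlinarith [mul_nonneg (sub_nonneg.2 h1) (sub_nonneg.2 h2), sq_nonneg (x - 1.67),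
    sq_nonneg x, mul_nonneg (mul_nonneg (sub_nonneg.2 h1) (sub_nonneg.2 h2)) (sq_nonneg x)]

private lemma aux_Nle {x : ℝ} (h1 : 1.64 ≤ x) (h2 : x ≤ 1.7) :
    x^2 + 1 ≤ x^5 * (-x^4 + x^3 + x^2 + 1) := by
  nlinarith [mul_nonneg (sub_nonneg.2 h1) (sub_nonneg.2 h2), sq_nonneg (x - 1.67),
    sq_nonneg x, mul_nonneg (mul_nonneg (sub_nonneg.2 h1) (sub_nonneg.2 h2)) (sq_nonneg x),
    mul_nonneg (mul_nonneg (sub_nonneg.2 h1) (sub_nonneg.2 h2)) (sq_nonneg (x^2)),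
    mul_nonneg (mul_nonneg (sub_nonneg.2 h1) (sub_nonneg.2 h2)) (sq_nonneg (x^2 - 2*x))]

private lemma aux_elast {x : ℝ} (h1 : 1.64 ≤ x) (h2 : x ≤ 1.7) :
    5 * ((x^2 + 1) * (-x^4 + x^3 + x^2 + 1)) <
      2*x^2 * (-x^4 + x^3 + x^2 + 1) - x * (-4*x^3 + 3*x^2 + 2*x) * (x^2 + 1) := by
  nlinarith [mul_nonneg (sub_nonneg.2 h1) (sub_nonneg.2 h2), sq_nonneg (x - 1.67),
    sq_nonneg x, mul_nonneg (mul_nonneg (sub_nonneg.2 h1) (sub_nonneg.2 h2)) (sq_nonneg x),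
    mul_nonneg (mul_nonneg (sub_nonneg.2 h1) (sub_nonneg.2 h2)) (sq_nonneg (x^2))]

/-- the function ln((q²+1)/(-q⁴+q³+q²+1))/ln q is strictly increasing
on [q₁, q₄], with value 3 at q₁ and 4 at q₄. -/
theorem log_ratio_strictMono (q1 q4 : ℝ)
    (hq1 : q1 ∈ Set.Ioo (1:ℝ) 2 ∧ q1^6 - q1^4 - q1^3 - 2*q1^2 - q1 - 1 = 0)
    (hq1u : ∀ q : ℝ, q ∈ Set.Ioo (1:ℝ) 2 → q^6 - q^4 - q^3 - 2*q^2 - q - 1 = 0 → q = q1)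
    (hq4 : q4 ∈ Set.Ioo (1:ℝ) 2 ∧ q4^7 - q4^5 - q4^4 - 2*q4^3 - 2*q4^2 - q4 - 1 = 0)
    (hq4u : ∀ q : ℝ, q ∈ Set.Ioo (1:ℝ) 2 → q^7 - q^5 - q^4 - 2*q^3 - 2*q^2 - q - 1 = 0 → q = q4) :
    StrictMonoOn (fun q : ℝ => Real.log ((q^2 + 1) / (-q^4 + q^3 + q^2 + 1)) / Real.log q)
      (Set.Icc q1 q4) ∧
    Real.log ((q1^2 + 1) / (-q1^4 + q1^3 + q1^2 + 1)) / Real.log q1 = 3 ∧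
    Real.log ((q4^2 + 1) / (-q4^4 + q4^3 + q4^2 + 1)) / Real.log q4 = 4 := by
  obtain ⟨hq1m, hq1e⟩ := hq1
  obtain ⟨hq4m, hq4e⟩ := hq4
  -- locate q1 in [1.64, 1.65]
  have hq1loc : q1 ∈ Set.Icc (1.64 : ℝ) 1.65 := by
    have hc : ContinuousOn (fun x : ℝ => x^6 - x^4 - x^3 - 2*x^2 - x - 1) (Set.Icc 1.64 1.65) :=
      (by fun_prop : Continuous fun x : ℝ => x^6 - x^4 - x^3 - 2*x^2 - x - 1).continuousOn
    have hiv := intermediate_value_Icc (by norm_num : (1.64:ℝ) ≤ 1.65) hc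
    have h0 : (0:ℝ) ∈ Set.Icc ((fun x : ℝ => x^6 - x^4 - x^3 - 2*x^2 - x - 1) 1.64)
        ((fun x : ℝ => x^6 - x^4 - x^3 - 2*x^2 - x - 1) 1.65) := by
      constructor <;> norm_num
    obtain ⟨c, hc1, hc2⟩ := hiv h0
    have hcq : c = q1 := hq1u c ⟨by linarith [hc1.1], by linarith [hc1.2]⟩ hc2
    rwa [hcq] at hc1
  -- locate q4 in [1.69, 1.70]
  have hq4loc : q4 ∈ Set.Icc (1.69 : ℝ) 1.7 := by
    have hc : ContinuousOn (fun x : ℝ => x^7 - x^5 - x^4 - 2*x^3 - 2*x^2 - x - 1)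
        (Set.Icc 1.69 1.7) :=
      (by fun_prop : Continuous fun x : ℝ => x^7 - x^5 - x^4 - 2*x^3 - 2*x^2 - x - 1).continuousOn
    have hiv := intermediate_value_Icc (by norm_num : (1.69:ℝ) ≤ 1.7) hc
    have h0 : (0:ℝ) ∈ Set.Icc ((fun x : ℝ => x^7 - x^5 - x^4 - 2*x^3 - 2*x^2 - x - 1) 1.69)
        ((fun x : ℝ => x^7 - x^5 - x^4 - 2*x^3 - 2*x^2 - x - 1) 1.7) := by
      constructor <;> norm_num
    obtain ⟨c, hc1, hc2⟩ := hiv h0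
    have hcq : c = q4 := hq4u c ⟨by linarith [hc1.1], by linarith [hc1.2]⟩ hc2
    rwa [hcq] at hc1
  have hsub : Set.Icc q1 q4 ⊆ Set.Icc (1.64:ℝ) 1.7 :=
    Set.Icc_subset_Icc hq1loc.1 (le_trans hq4loc.2 le_rfl)
  -- basic facts on the interval
  have key : ∀ x : ℝ, 1.64 ≤ x → x ≤ 1.7 →
      HasDerivAt (fun q : ℝ => (Real.log (q^2+1) - Real.log (-q^4+q^3+q^2+1)) / Real.log q)
        (((2*x/(x^2+1) - (-4*x^3+3*x^2+2*x)/(-x^4+x^3+x^2+1)) * Real.log x -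
          (Real.log (x^2+1) - Real.log (-x^4+x^3+x^2+1)) * x⁻¹) / (Real.log x)^2) x := by
    intro x h1 h2
    have hx0 : (0:ℝ) < x := by linarith
    have hx1 : (1:ℝ) < x := by linarith
    have hD : 0 < -x^4+x^3+x^2+1 := aux_Dpos h1 h2
    have hN : (0:ℝ) < x^2+1 := by positivity
    have hlx : Real.log x ≠ 0 := ne_of_gt (Real.log_pos hx1)
    have hP : HasDerivAt (fun q : ℝ => q^2+1) (2*x) x := by
      simpa using (hasDerivAt_pow 2 x).add_const 1
    have hDd : HasDerivAt (fun q : ℝ => -q^4+q^3+q^2+1) (-4*x^3+3*x^2+2*x) x := by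
      have := ((((hasDerivAt_pow 4 x).neg).add (hasDerivAt_pow 3 x)).add
        (hasDerivAt_pow 2 x)).add_const 1
      refine this.congr_deriv ?_
      push_cast; ring
    have hnum : HasDerivAt (fun q : ℝ => Real.log (q^2+1) - Real.log (-q^4+q^3+q^2+1))
        (2*x/(x^2+1) - (-4*x^3+3*x^2+2*x)/(-x^4+x^3+x^2+1)) x := by
      exact ((hP.log (ne_of_gt hN)).sub (hDd.log (ne_of_gt hD)))
    exact hnum.div (Real.hasDerivAt_log (ne_of_gt hx0)) hlx
  have hmono : StrictMonoOn
      (fun q : ℝ => (Real.log (q^2+1) - Real.log (-q^4+q^3+q^2+1)) / Real.log q)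
      (Set.Icc q1 q4) := by
    apply strictMonoOn_of_deriv_pos (convex_Icc q1 q4)
    · intro x hx
      obtain ⟨h1, h2⟩ := hsub hx
      exact ((key x h1 h2).continuousAt).continuousWithinAt
    · intro x hx
      rw [interior_Icc] at hx
      have h1 : (1.64:ℝ) ≤ x := le_trans hq1loc.1 (le_of_lt hx.1)
      have h2 : x ≤ 1.7 := le_trans (le_of_lt hx.2) hq4loc.2
      rw [(key x h1 h2).deriv]
      have hx0 : (0:ℝ) < x := by linarith
      have hx1 : (1:ℝ) < x := by linarith
      have hD : 0 < -x^4+x^3+x^2+1 := aux_Dpos h1 h2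
      have hN : (0:ℝ) < x^2+1 := by positivity
      have hL : 0 < Real.log x := Real.log_pos hx1
      -- log N ≤ 5 log x
      have hlogbound : Real.log (x^2+1) - Real.log (-x^4+x^3+x^2+1) ≤ 5 * Real.log x := by
        have h5 : Real.log (x^2+1) ≤ Real.log (x^5 * (-x^4+x^3+x^2+1)) :=
          Real.log_le_log hN (aux_Nle h1 h2)
        rw [Real.log_mul (by positivity) (ne_of_gt hD), Real.log_pow] at h5
        push_cast at h5
        linarith
      -- elasticity > 5
      have helast : 5 / x < 2*x/(x^2+1) - (-4*x^3+3*x^2+2*x)/(-x^4+x^3+x^2+1) := by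
        rw [div_sub_div _ _ (ne_of_gt hN) (ne_of_gt hD), div_lt_div_iff₀ hx0 (by positivity)]
        nlinarith [aux_elast h1 h2]
      apply div_pos _ (by positivity)
      have hxinv : 0 < x⁻¹ := by positivity
      have : (Real.log (x^2+1) - Real.log (-x^4+x^3+x^2+1)) * x⁻¹ ≤ 5 * Real.log x * x⁻¹ :=
        mul_le_mul_of_nonneg_right hlogbound (le_of_lt hxinv)
      have h2' : 5 * Real.log x * x⁻¹ = (5/x) * Real.log x := by field_simp
      nlinarith [mul_lt_mul_of_pos_right helast hL]
  have hq1b := hsub (Set.left_mem_Icc.2 (le_trans hq1loc.2 (by linarith [hq4loc.1])))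
  have hq4b := hsub (Set.right_mem_Icc.2 (le_trans hq1loc.2 (by linarith [hq4loc.1])))
  have hD1 : 0 < -q1^4+q1^3+q1^2+1 := aux_Dpos hq1b.1 hq1b.2
  have hD4 : 0 < -q4^4+q4^3+q4^2+1 := aux_Dpos hq4b.1 hq4b.2
  refine ⟨?_, ?_, ?_⟩
  · intro x hx y hy hxy
    have hEq : ∀ z ∈ Set.Icc q1 q4,
        Real.log ((z^2 + 1) / (-z^4 + z^3 + z^2 + 1)) / Real.log z =
        (Real.log (z^2+1) - Real.log (-z^4+z^3+z^2+1)) / Real.log z := by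
      intro z hz
      obtain ⟨h1, h2⟩ := hsub hz
      have hD : 0 < -z^4+z^3+z^2+1 := aux_Dpos h1 h2
      rw [Real.log_div (by positivity) (ne_of_gt hD)]
    simp only
    rw [hEq x hx, hEq y hy]
    exact hmono hx hy hxy
  · have hratio : (q1^2 + 1) / (-q1^4 + q1^3 + q1^2 + 1) = q1^3 := by
      rw [div_eq_iff (ne_of_gt hD1)]
      linear_combination (q1 - 1) * hq1e
    rw [hratio, show q1^3 = q1^(3:ℕ) by norm_num, Real.log_pow]
    have : Real.log q1 ≠ 0 := ne_of_gt (Real.log_pos (by linarith [hq1b.1]))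
    field_simp
    norm_num
  · have hratio : (q4^2 + 1) / (-q4^4 + q4^3 + q4^2 + 1) = q4^4 := by
      rw [div_eq_iff (ne_of_gt hD4)]
      linear_combination (q4 - 1) * hq4e
    rw [hratio, show q4^4 = q4^(4:ℕ) by norm_num, Real.log_pow]
    have : Real.log q4 ≠ 0 := ne_of_gt (Real.log_pos (by linarith [hq4b.1]))
    field_simp
    norm_num
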